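/- For angles θ₁,…,θ_{k−1}, the product exp(θ₁H₁)⋯exp(θ_{k−1}H_{k−1}) applied to the standard basis vector e₁ ∈ ℝ^n yields a vector whose entries at positions 1, s₁+1, …, s_{k−1}+1 are a₁,…,a_k respectively (and 0 elsewhere), where a_i = sinθ_{i−1}·cosθ_i·cosθ_{i+1}⋯cosθ_{k−1} (with the convention sinθ₀ = 1, i.e. a₁ = cosθ₁⋯cosθ_{k−1} and a_k = sinθ_{k−1}). -/

import Mathlib

open Matrix Nat

/-- The matrix unit `E_{i,j}` (0-based indices) in `M(n, R)`; zero if indices out of range. -/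
def Eu (R : Type*) [Zero R] [One R] (n i j : ℕ) : Matrix (Fin n) (Fin n) R :=
  fun a b => if a.1 = i ∧ b.1 = j then 1 else 0

section Aux

variable {N : ℕ}

/-- the `ℕ`-indexed standard basis vector -/
private def ebase (N m : ℕ) : Fin N → ℝ := fun a => if a.1 = m then 1 else 0

private lemma ebase_eq_single (m : ℕ) (hm : m < N) : ebase N m = Pi.single ⟨m, hm⟩ 1 := by
  funext a
  rcases eq_or_ne a (⟨m, hm⟩ : Fin N) with h | h
  · subst h; simp [ebase]
  · rw [Pi.single_eq_of_ne h]
    simp only [ebase, ite_eq_right_iff]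
    intro hh
    exact absurd (Fin.ext hh) h

private lemma mulVec_ebase (M : Matrix (Fin N) (Fin N) ℝ) (m : ℕ) (hm : m < N) :
    M.mulVec (ebase N m) = fun a => M a ⟨m, hm⟩ := by
  rw [ebase_eq_single m hm, Matrix.mulVec_single]
  simp
  rfl

/-- mulVec as a continuous linear map in the matrix argument -/
private noncomputable def mulVecCLM (v : Fin N → ℝ) :
    Matrix (Fin N) (Fin N) ℝ →L[ℝ] (Fin N → ℝ) :=
  LinearMap.toContinuousLinearMap
    { toFun := fun M => M.mulVec v
      map_add' := fun A B => Matrix.add_mulVec A B v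
      map_smul' := fun c A => Matrix.smul_mulVec c A v }

private lemma hasSum_exp_smul_mulVec (A : Matrix (Fin N) (Fin N) ℝ) (θ : ℝ) (v : Fin N → ℝ) :
    HasSum (fun m : ℕ => ((m ! : ℝ)⁻¹ * θ ^ m) • (A ^ m).mulVec v)
      ((NormedSpace.exp (θ • A)).mulVec v) := by
  letI : SeminormedRing (Matrix (Fin N) (Fin N) ℝ) := Matrix.linftyOpSemiNormedRing
  letI : NormedRing (Matrix (Fin N) (Fin N) ℝ) := Matrix.linftyOpNormedRing
  letI : NormedAlgebra ℝ (Matrix (Fin N) (Fin N) ℝ) := Matrix.linftyOpNormedAlgebra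
  have h := NormedSpace.exp_series_hasSum_exp' (𝕂 := ℝ) (θ • A)
  have h2 := (mulVecCLM v).hasSum h
  convert h2 using 2 with m
  show ((m ! : ℝ)⁻¹ * θ ^ m) • (A ^ m).mulVec v = ((m ! : ℝ)⁻¹ • (θ • A) ^ m).mulVec v
  rw [smul_pow, smul_smul, Matrix.smul_mulVec]
  rfl

private lemma exp_smul_mulVec_of_fixed (A : Matrix (Fin N) (Fin N) ℝ) (θ : ℝ) (v : Fin N → ℝ)
    (h : A.mulVec v = 0) : (NormedSpace.exp (θ • A)).mulVec v = v := by
  have h1 := hasSum_exp_smul_mulVec A θ v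
  have h2 : HasSum (fun m : ℕ => ((m ! : ℝ)⁻¹ * θ ^ m) • (A ^ m).mulVec v) v := by
    have h3 := hasSum_single (f := fun m : ℕ => ((m ! : ℝ)⁻¹ * θ ^ m) • (A ^ m).mulVec v) 0 ?_
    · simpa using h3
    · intro m hm
      obtain ⟨j, rfl⟩ := Nat.exists_eq_succ_of_ne_zero hm
      have : (A ^ (j + 1)).mulVec v = 0 := by
        rw [pow_succ, ← Matrix.mulVec_mulVec, h, Matrix.mulVec_zero]
      simp [this]
  exact h1.unique h2

private lemma pow_mulVec_rot (A : Matrix (Fin N) (Fin N) ℝ) (u w : Fin N → ℝ)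
    (hu : A.mulVec u = w) (hw : A.mulVec w = -u) (m : ℕ) :
    (A ^ (2 * m)).mulVec u = ((-1 : ℝ) ^ m) • u ∧
    (A ^ (2 * m + 1)).mulVec u = ((-1 : ℝ) ^ m) • w := by
  induction m with
  | zero => simp [Matrix.one_mulVec, pow_one, hu]
  | succ m ih =>
    have he : (A ^ (2 * (m + 1))).mulVec u = ((-1 : ℝ) ^ (m + 1)) • u := by
      have : 2 * (m + 1) = (2 * m + 1) + 1 := by ring
      rw [this, _root_.pow_succ', ← Matrix.mulVec_mulVec, ih.2, Matrix.mulVec_smul, hw]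
      rw [pow_succ]
      rw [smul_neg]
      module
    refine ⟨he, ?_⟩
    rw [_root_.pow_succ', ← Matrix.mulVec_mulVec, he, Matrix.mulVec_smul, hu]

private lemma exp_smul_mulVec_rot (A : Matrix (Fin N) (Fin N) ℝ) (θ : ℝ) (u w : Fin N → ℝ)
    (hu : A.mulVec u = w) (hw : A.mulVec w = -u) :
    (NormedSpace.exp (θ • A)).mulVec u = Real.cos θ • u + Real.sin θ • w := by
  have h1 := hasSum_exp_smul_mulVec A θ u
  have hc := (Real.hasSum_cos θ).smul_const u
  have hs := (Real.hasSum_sin θ).smul_const w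
  have h2 : HasSum (fun m : ℕ => ((m ! : ℝ)⁻¹ * θ ^ m) • (A ^ m).mulVec u)
      (Real.cos θ • u + Real.sin θ • w) := by
    refine HasSum.even_add_odd ?_ ?_
    · convert hc using 2 with m
      rw [(pow_mulVec_rot A u w hu hw m).1, smul_smul]
      congr 1
      field_simp
    · convert hs using 2 with m
      rw [(pow_mulVec_rot A u w hu hw m).2, smul_smul]
      congr 1
      field_simp
  exact h1.unique h2

private lemma Amat_e0 (p : ℕ) (hp : p < N) (hp0 : p ≠ 0) (h0 : 0 < N) :
    (Eu ℝ N p 0 - Eu ℝ N 0 p).mulVec (ebase N 0) = ebase N p := by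
  rw [Matrix.sub_mulVec, mulVec_ebase _ 0 h0, mulVec_ebase _ 0 h0]
  funext a
  simp [Eu, ebase, hp0, Ne.symm hp0]

private lemma Amat_ep (p : ℕ) (hp : p < N) (hp0 : p ≠ 0) :
    (Eu ℝ N p 0 - Eu ℝ N 0 p).mulVec (ebase N p) = -(ebase N 0) := by
  rw [Matrix.sub_mulVec, mulVec_ebase _ p hp, mulVec_ebase _ p hp]
  funext a
  simp [Eu, ebase, hp0]

private lemma Amat_em (p m : ℕ) (hm : m < N) (hm0 : m ≠ 0) (hmp : m ≠ p) :
    (Eu ℝ N p 0 - Eu ℝ N 0 p).mulVec (ebase N m) = 0 := by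
  rw [Matrix.sub_mulVec, mulVec_ebase _ m hm, mulVec_ebase _ m hm]
  funext a
  simp [Eu, ebase, hm0, hmp]

end Aux

theorem exp_rotations_apply_e1
    (n k : ℕ) (hk : 0 < k) (ns : ℕ → ℕ) (hns : ∀ i < k, 0 < ns i)
    (hn : n = ∑ t ∈ Finset.range k, ns t)
    (θ : ℕ → ℝ) :
    ∀ j : Fin n,
      ((List.ofFn (fun t : Fin (k-1) =>
          NormedSpace.exp (θ t.1 • (Eu ℝ n (∑ s ∈ Finset.range (t.1+1), ns s) 0
            - Eu ℝ n 0 (∑ s ∈ Finset.range (t.1+1), ns s))))).prod).mulVec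
        (fun a : Fin n => if a.1 = 0 then (1:ℝ) else 0) j
      = ∑ i ∈ Finset.range k,
          if j.1 = ∑ s ∈ Finset.range i, ns s then
            (if i = 0 then 1 else Real.sin (θ (i-1)))
              * ∏ t ∈ Finset.Ico i (k-1), Real.cos (θ t)
          else 0 := by
  set S : ℕ → ℕ := fun i => ∑ s ∈ Finset.range i, ns s with hSdef
  have hS0 : S 0 = 0 := by simp [hSdef]
  have hSk : S k = n := hn.symm
  have hSlt : ∀ {a b : ℕ}, a < b → b ≤ k → S a < S b := by
    intro a b hab hbk
    have h1 : S a + ns a ≤ S b := by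
      have : S (a + 1) ≤ S b := by
        apply Finset.sum_le_sum_of_subset
        exact Finset.range_subset_range.2 hab
      simpa [hSdef, Finset.sum_range_succ] using this
    have := hns a (lt_of_lt_of_le hab hbk)
    omega
  set M : ℕ → Matrix (Fin n) (Fin n) ℝ := fun t =>
    NormedSpace.exp (θ t • (Eu ℝ n (S (t+1)) 0 - Eu ℝ n 0 (S (t+1)))) with hMdef
  set W : ℕ → (Fin n → ℝ) := fun j' =>
    (∏ t ∈ Finset.Ico j' (k-1), Real.cos (θ t)) • ebase n 0
      + ∑ i ∈ Finset.Ico (j'+1) k,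
          (Real.sin (θ (i-1)) * ∏ t ∈ Finset.Ico i (k-1), Real.cos (θ t)) • ebase n (S i)
    with hWdef
  have hn0 : 0 < n := by
    rw [← hSk]
    have := hSlt hk (le_refl k)
    omega
  have key : ∀ d, d ≤ k - 1 →
      ((List.ofFn (fun t : Fin d => M (k-1-d + t.1))).prod).mulVec (ebase n 0)
        = W (k-1-d) := by
    intro d
    induction d with
    | zero =>
      intro _
      rw [List.ofFn_zero, List.prod_nil, Matrix.one_mulVec]
      have h1 : k - 1 - 0 = k - 1 := by omega
      rw [h1, hWdef]
      simp only [Finset.Ico_self, Finset.prod_empty, one_smul]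
      have h2 : Finset.Ico (k - 1 + 1) k = ∅ := by
        apply Finset.Ico_eq_empty
        omega
      rw [h2, Finset.sum_empty, add_zero]
    | succ d ih =>
      intro hd
      set jj := k - 1 - (d + 1) with hjjdef
      have hjj1 : k - 1 - d = jj + 1 := by omega
      have hjjk : jj + 1 < k := by omega
      have hjjk1 : jj < k - 1 := by omega
      -- split the list
      rw [List.ofFn_succ]
      have hidx : ∀ i : Fin d, jj + (i.succ.1) = jj + 1 + i.1 := by
        intro i
        simp only [Fin.val_succ]
        omega
      simp only [Fin.val_zero, Nat.add_zero, Fin.val_succ]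
      rw [List.prod_cons, ← Matrix.mulVec_mulVec]
      have hlist : (fun i : Fin d => M (jj + (i.1 + 1))) = fun i : Fin d => M (jj + 1 + i.1) := by
        funext i
        have : jj + (i.1 + 1) = jj + 1 + i.1 := by omega
        rw [this]
      have ih' := ih (by omega)
      rw [hjj1] at ih'
      rw [hlist, ih']
      -- now compute M jj *ᵥ W (jj + 1)
      have hp_lt : S (jj + 1) < n := by rw [← hSk]; exact hSlt hjjk (le_refl k)
      have hp_ne : S (jj + 1) ≠ 0 := by
        have h := hSlt (show 0 < jj + 1 by omega) (by omega)
        rw [hS0] at h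
        omega
      have hrot : (M jj).mulVec (ebase n 0)
          = Real.cos (θ jj) • ebase n 0 + Real.sin (θ jj) • ebase n (S (jj + 1)) := by
        rw [hMdef]
        exact exp_smul_mulVec_rot _ _ _ _
          (Amat_e0 _ hp_lt hp_ne hn0)
          (Amat_ep _ hp_lt hp_ne)
      have hfix : ∀ i ∈ Finset.Ico (jj + 2) k, (M jj).mulVec (ebase n (S i)) = ebase n (S i) := by
        intro i hi
        rw [Finset.mem_Ico] at hi
        have hi_lt : S i < n := by rw [← hSk]; exact hSlt hi.2 le_rfl
        have hi_ne0 : S i ≠ 0 := by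
          have h := hSlt (show 0 < i by omega) (le_of_lt hi.2)
          rw [hS0] at h; omega
        have hi_nep : S i ≠ S (jj + 1) := by
          have h := hSlt (show jj + 1 < i by omega) (le_of_lt hi.2)
          omega
        rw [hMdef]
        exact exp_smul_mulVec_of_fixed _ _ _ (Amat_em _ _ hi_lt hi_ne0 hi_nep)
      -- assemble
      conv_lhs => rw [hWdef]
      simp only []
      rw [← Matrix.mulVecLin_apply, map_add, LinearMap.map_smul, map_sum]
      simp only [LinearMap.map_smul, Matrix.mulVecLin_apply, hrot]
      rw [Finset.sum_congr rfl (fun i hi => by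
        rw [hfix i (by simpa [Nat.add_assoc] using hi)])]
      -- now compare with W jj
      rw [hWdef]
      simp only []
      rw [Finset.prod_eq_prod_Ico_succ_bot hjjk1 (fun t => Real.cos (θ t))]
      rw [Finset.sum_eq_sum_Ico_succ_bot hjjk
        (fun i => (Real.sin (θ (i-1)) * ∏ t ∈ Finset.Ico i (k-1), Real.cos (θ t)) • ebase n (S i))]
      have h11 : jj + 1 - 1 = jj := by omega
      have h12 : jj + 1 + 1 = jj + 2 := by omega
      rw [h11, h12]
      module
  -- conclude from `key` at `d = k - 1`
  intro j
  have hk1 : k - 1 ≤ k - 1 := le_rfl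
  have h0 : k - 1 - (k - 1) = 0 := by omega
  have hkey := key (k - 1) hk1
  rw [h0] at hkey
  have hlist2 : (fun t : Fin (k-1) =>
      NormedSpace.exp (θ t.1 • (Eu ℝ n (∑ s ∈ Finset.range (t.1+1), ns s) 0
        - Eu ℝ n 0 (∑ s ∈ Finset.range (t.1+1), ns s)))) = fun t : Fin (k-1) => M (0 + t.1) := by
    funext t
    rw [hMdef]
    simp [hSdef]
  have he0 : (fun a : Fin n => if a.1 = 0 then (1:ℝ) else 0) = ebase n 0 := rfl
  rw [hlist2, he0, hkey, hWdef]
  simp only [Pi.add_apply, Pi.smul_apply, Finset.sum_apply, smul_eq_mul]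
  rw [show Finset.range k = Finset.Ico 0 k from Finset.range_eq_Ico k]
  rw [Finset.sum_eq_sum_Ico_succ_bot hk
      (fun i => if j.1 = S i then (if i = 0 then 1 else Real.sin (θ (i-1)))
        * ∏ t ∈ Finset.Ico i (k-1), Real.cos (θ t) else 0)]
  rw [hS0]
  congr 1
  · simp only [ebase, if_pos rfl]
    rcases eq_or_ne (j.1 : ℕ) 0 with h | h
    · simp [h, mul_comm]
    · simp [h]
  · refine Finset.sum_congr rfl fun i hi => ?_
    rw [Finset.mem_Ico] at hi
    have hi0 : i ≠ 0 := by omega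
    simp only [hi0, if_false, ebase]
    rcases eq_or_ne (j.1 : ℕ) (S i) with h | h
    · simp [h]
    · simp [h]
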